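/- arXiv:2203.02084 — 6 statements merged into one kernel-verified Lean document; each statement's English description precedes it below -/
import Mathlib

section
/- Let A ∈ ℝ^{n×n}, B ∈ ℝ^{n×p}, F ∈ ℝ^{m×m}, G ∈ ℝ^{m×q}, L ∈ ℝ^{q×m}, P ∈ ℝ^{n×m}, Q ∈ ℝ^{p×m} be real matrices satisfying the simulation-relation condition P F = A P + B Q. Suppose x₁ : ℝ → ℝⁿ has derivative A x₁(t) + B u₁(t) + c(t) at time t (concrete dynamics) and x₂ : ℝ → ℝᵐ has derivative (F + G L) x₂(t) + G ū₂(t) at t (transformed abstraction dynamics), where u₁, ū₂, c are given functions. Then the error state x̃ := x₁ − P x₂ has derivative A x̃(t) + B u₁(t) − (B Q + P G L) x₂(t) − P G ū₂(t) + c(t) at t. (This is the joint error-dynamics derivation of the robust approximate simulation framework.) -/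
open Matrix

/-- Joint error-dynamics derivation of the robust approximate simulation framework:
if `P F = A P + B Q`, the concrete state `x₁` satisfies `ẋ₁ = A x₁ + B u₁ + c` and the
transformed abstraction satisfies `ẋ₂ = (F + G L) x₂ + G ū₂`, then the error state
`x̃ = x₁ - P x₂` satisfies `ẋ̃ = A x̃ + B u₁ - (B Q + P G L) x₂ - P G ū₂ + c`. -/
theorem stmt_1 {n m p q : ℕ}
    (A : Matrix (Fin n) (Fin n) ℝ) (B : Matrix (Fin n) (Fin p) ℝ)
    (F : Matrix (Fin m) (Fin m) ℝ) (G : Matrix (Fin m) (Fin q) ℝ)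
    (L : Matrix (Fin q) (Fin m) ℝ) (P : Matrix (Fin n) (Fin m) ℝ)
    (Q : Matrix (Fin p) (Fin m) ℝ)
    (hPF : P * F = A * P + B * Q)
    (x₁ : ℝ → Fin n → ℝ) (x₂ : ℝ → Fin m → ℝ)
    (u₁ : ℝ → Fin p → ℝ) (ubar₂ : ℝ → Fin q → ℝ) (c : ℝ → Fin n → ℝ) (t : ℝ)
    (hx₁ : HasDerivAt x₁ (A *ᵥ x₁ t + B *ᵥ u₁ t + c t) t)
    (hx₂ : HasDerivAt x₂ ((F + G * L) *ᵥ x₂ t + G *ᵥ ubar₂ t) t) :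
    HasDerivAt (fun s => x₁ s - P *ᵥ x₂ s)
      (A *ᵥ (x₁ t - P *ᵥ x₂ t) + B *ᵥ u₁ t
        - (B * Q + P * G * L) *ᵥ x₂ t - (P * G) *ᵥ ubar₂ t + c t) t := by
  have h2 : HasDerivAt (fun s => P *ᵥ x₂ s)
      (P *ᵥ ((F + G * L) *ᵥ x₂ t + G *ᵥ ubar₂ t)) t :=
    ((P.mulVecLin.toContinuousLinearMap).hasFDerivAt.comp_hasDerivAt t hx₂)
  have h := hx₁.fun_sub h2
  refine h.congr_deriv ?_
  simp only [LinearMap.coe_toContinuousLinearMap', Matrix.mulVecLin_apply, mulVec_add,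
    add_mulVec, mulVec_mulVec, Matrix.sub_mulVec, Matrix.mulVec_sub, hPF, Matrix.mul_assoc]
  abel
end

section
/- Let A ∈ ℝ^{n×n}, B ∈ ℝ^{n×p}, F ∈ ℝ^{m×m}, G ∈ ℝ^{m×q}, L ∈ ℝ^{q×m}, P ∈ ℝ^{n×m}, Q ∈ ℝ^{p×m}, R ∈ ℝ^{p×q}, K ∈ ℝ^{p×n} be real matrices with P F = A P + B Q. Suppose x₁ : ℝ → ℝⁿ has derivative A x₁(t) + B u₁(t) + c(t) at t, x₂ : ℝ → ℝᵐ has derivative (F + G L) x₂(t) + G ū₂(t) at t, and the input is given by the interface u₁(t) = R ū₂(t) + (Q + R L) x₂(t) + K (x₁(t) − P x₂(t)). Then x̃ := x₁ − P x₂ has derivative (A + B K) x̃(t) + (B R − P G)(L x₂(t) + ū₂(t)) + c(t) at t. (Closed-loop error dynamics of the joint system under the interface.) -/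
open Matrix

/-- Closed-loop error dynamics of the joint system under the interface
`u₁ = R ū₂ + (Q + R L) x₂ + K (x₁ - P x₂)`: the error state `x̃ = x₁ - P x₂` satisfies
`ẋ̃ = (A + B K) x̃ + (B R - P G)(L x₂ + ū₂) + c`. -/
theorem stmt_2 {n m p q : ℕ}
    (A : Matrix (Fin n) (Fin n) ℝ) (B : Matrix (Fin n) (Fin p) ℝ)
    (F : Matrix (Fin m) (Fin m) ℝ) (G : Matrix (Fin m) (Fin q) ℝ)
    (L : Matrix (Fin q) (Fin m) ℝ) (P : Matrix (Fin n) (Fin m) ℝ)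
    (Q : Matrix (Fin p) (Fin m) ℝ) (R : Matrix (Fin p) (Fin q) ℝ)
    (K : Matrix (Fin p) (Fin n) ℝ)
    (hPF : P * F = A * P + B * Q)
    (x₁ : ℝ → Fin n → ℝ) (x₂ : ℝ → Fin m → ℝ)
    (u₁ : ℝ → Fin p → ℝ) (ubar₂ : ℝ → Fin q → ℝ) (c : ℝ → Fin n → ℝ) (t : ℝ)
    (hx₁ : HasDerivAt x₁ (A *ᵥ x₁ t + B *ᵥ u₁ t + c t) t)
    (hx₂ : HasDerivAt x₂ ((F + G * L) *ᵥ x₂ t + G *ᵥ ubar₂ t) t)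
    (hu₁ : u₁ t = R *ᵥ ubar₂ t + (Q + R * L) *ᵥ x₂ t + K *ᵥ (x₁ t - P *ᵥ x₂ t)) :
    HasDerivAt (fun s => x₁ s - P *ᵥ x₂ s)
      ((A + B * K) *ᵥ (x₁ t - P *ᵥ x₂ t)
        + (B * R - P * G) *ᵥ (L *ᵥ x₂ t + ubar₂ t) + c t) t := by
  have hP : HasDerivAt (fun s => P *ᵥ x₂ s)
      (P *ᵥ ((F + G * L) *ᵥ x₂ t + G *ᵥ ubar₂ t)) t :=
    (Matrix.mulVecLin P).toContinuousLinearMap.hasFDerivAt.comp_hasDerivAt t hx₂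
  have h : HasDerivAt (fun s => x₁ s - P *ᵥ x₂ s) _ t := hx₁.sub hP
  convert h using 1
  have hPF' : P *ᵥ (F *ᵥ x₂ t) = A *ᵥ (P *ᵥ x₂ t) + B *ᵥ (Q *ᵥ x₂ t) := by
    rw [mulVec_mulVec, hPF, add_mulVec, mulVec_mulVec, mulVec_mulVec]
  simp only [hu₁, add_mulVec, sub_mulVec, mulVec_add, mulVec_sub, ← mulVec_mulVec, hPF']
  abel
end

section
/- Let M be a symmetric positive definite N×N real matrix, λ > 0, κ > 0, A an N×N real matrix, E a b×N real matrix, and W a symmetric b×b real matrix with nonnegative entries, such that AᵀM + MA + EᵀWE + λM ⪯ 0. Let ω : ℝ → ℝ^N have derivative A ω(t) + v₁ + v₂ + c at time t for some vectors v₁, v₂, c ∈ ℝ^N, and suppose E ω(t) ≥ 0 entrywise and ω(t) ≠ 0. Then t ↦ V(ω(t)) = (1/κ)√(ω(t)ᵀMω(t)) has a derivative D at t satisfying D ≤ −(λ/2) V(ω(t)) + (1/κ)(√(v₁ᵀMv₁) + √(v₂ᵀMv₂) + √(cᵀMc)). (Per-mode differential inequality for the simulation function in a mode whose cell boundaries cross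 the origin, as in the proof of Theorem 1.) -/
open Matrix

private lemma dot_symm' {n : ℕ} (M : Matrix (Fin n) (Fin n) ℝ)
    (h : ∀ i j, M i j = M j i) (x y : Fin n → ℝ) :
    y ⬝ᵥ M *ᵥ x = x ⬝ᵥ M *ᵥ y := by
  simp only [dotProduct, mulVec, Finset.mul_sum]
  rw [Finset.sum_comm]
  refine Finset.sum_congr rfl fun i _ => Finset.sum_congr rfl fun j _ => ?_
  rw [h j i]; ring

private lemma cs' {n : ℕ} (M : Matrix (Fin n) (Fin n) ℝ)
    (hpsd : ∀ z : Fin n → ℝ, 0 ≤ z ⬝ᵥ M *ᵥ z)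
    (hsym : ∀ i j, M i j = M j i) (x y : Fin n → ℝ) :
    x ⬝ᵥ M *ᵥ y ≤ Real.sqrt (x ⬝ᵥ M *ᵥ x) * Real.sqrt (y ⬝ᵥ M *ᵥ y) := by
  set a := y ⬝ᵥ M *ᵥ y with ha
  set cc := x ⬝ᵥ M *ᵥ x with hcc
  set bb := x ⬝ᵥ M *ᵥ y with hbb
  have key : ∀ r : ℝ, 0 ≤ a * (r * r) + (2 * bb) * r + cc := by
    intro r
    have h0 := hpsd (x + r • y)
    have hexp : (x + r • y) ⬝ᵥ M *ᵥ (x + r • y)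
        = a * (r * r) + (2 * bb) * r + cc := by
      have hyx : y ⬝ᵥ M *ᵥ x = bb := dot_symm' M hsym x y
      simp only [mulVec_add, dotProduct_add, add_dotProduct, mulVec_smul,
        dotProduct_smul, smul_dotProduct, smul_eq_mul, hyx, ← ha, ← hcc, ← hbb]
      ring
    rw [hexp] at h0
    exact h0
  have hd := discrim_le_zero key
  rw [discrim] at hd
  have hsq : bb ^ 2 ≤ cc * a := by nlinarith [hd]
  calc bb ≤ |bb| := le_abs_self bb
    _ = Real.sqrt (bb ^ 2) := (Real.sqrt_sq_eq_abs bb).symm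
    _ ≤ Real.sqrt (cc * a) := Real.sqrt_le_sqrt hsq
    _ = Real.sqrt cc * Real.sqrt a := Real.sqrt_mul (hpsd x) a

/-- Per-mode differential inequality for the simulation function (mode whose cell
boundaries cross the origin): under the LMI `Aᵀ M + M A + Eᵀ W E + λ M ⪯ 0`, on the
cell `E ω(t) ≥ 0` and with `ω̇ = A ω + v₁ + v₂ + c`, the simulation function
`V(ω) = (1/κ)√(ωᵀ M ω)` has a derivative `D` at `t` with
`D ≤ -(λ/2) V(ω(t)) + (1/κ)(√(v₁ᵀMv₁) + √(v₂ᵀMv₂) + √(cᵀMc))`. -/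
theorem stmt_7 {N b : ℕ} (M : Matrix (Fin N) (Fin N) ℝ) (hM : M.PosDef)
    (lam κ : ℝ) (hlam : 0 < lam) (hκ : 0 < κ)
    (A : Matrix (Fin N) (Fin N) ℝ) (E : Matrix (Fin b) (Fin N) ℝ)
    (W : Matrix (Fin b) (Fin b) ℝ) (hW : W.IsSymm) (hWpos : ∀ i j, 0 ≤ W i j)
    (hLMI : (-(Aᵀ * M + M * A + Eᵀ * W * E + lam • M)).PosSemidef)
    (ω : ℝ → Fin N → ℝ) (v₁ v₂ c : Fin N → ℝ) (t : ℝ)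
    (hω : HasDerivAt ω (A *ᵥ ω t + v₁ + v₂ + c) t)
    (hE : ∀ i, 0 ≤ (E *ᵥ ω t) i) (hne : ω t ≠ 0) :
    ∃ D : ℝ, HasDerivAt (fun s => (1 / κ) * Real.sqrt (ω s ⬝ᵥ M *ᵥ ω s)) D t ∧
      D ≤ -(lam / 2) * ((1 / κ) * Real.sqrt (ω t ⬝ᵥ M *ᵥ ω t))
        + (1 / κ) * (Real.sqrt (v₁ ⬝ᵥ M *ᵥ v₁) + Real.sqrt (v₂ ⬝ᵥ M *ᵥ v₂)
          + Real.sqrt (c ⬝ᵥ M *ᵥ c)) := by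
  have hsym : ∀ i j, M i j = M j i := by
    intro i j
    have := congrFun (congrFun hM.1 i) j
    simpa using this.symm
  have hpsd : ∀ z : Fin N → ℝ, 0 ≤ z ⬝ᵥ M *ᵥ z := by
    intro z
    rcases eq_or_ne z 0 with rfl | hz
    · simp
    · have h := hM.dotProduct_mulVec_pos hz
      have h' : 0 < z ⬝ᵥ M *ᵥ z := by simpa using h
      exact h'.le
  set u : Fin N → ℝ := A *ᵥ ω t + v₁ + v₂ + c with hu
  have hcomp : ∀ i, HasDerivAt (fun s => ω s i) (u i) t := hasDerivAt_pi.mp hω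
  -- derivative of the quadratic form
  set q' : ℝ := u ⬝ᵥ M *ᵥ ω t + ω t ⬝ᵥ M *ᵥ u with hq'def
  have hq : HasDerivAt (fun s => ω s ⬝ᵥ M *ᵥ ω s) q' t := by
    have h1 : HasDerivAt (fun s => ∑ i, ω s i * ∑ j, M i j * ω s j)
        (∑ i, (u i * ∑ j, M i j * ω t j + ω t i * ∑ j, M i j * u j)) t :=
      HasDerivAt.fun_sum fun i _ =>
        (hcomp i).mul (HasDerivAt.fun_sum fun j _ => (hcomp j).const_mul (M i j))
    have heq : q' = ∑ i, (u i * ∑ j, M i j * ω t j + ω t i * ∑ j, M i j * u j) := by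
      simp [hq'def, dotProduct, mulVec, Finset.sum_add_distrib]
    have hfun : (fun s => ω s ⬝ᵥ M *ᵥ ω s)
        = fun s => ∑ i, ω s i * ∑ j, M i j * ω s j := by
      funext s; simp [dotProduct, mulVec]
    rw [heq, hfun]
    exact h1
  have hqpos : 0 < ω t ⬝ᵥ M *ᵥ ω t := by simpa using hM.dotProduct_mulVec_pos hne
  set r : ℝ := Real.sqrt (ω t ⬝ᵥ M *ᵥ ω t) with hr
  have hrpos : 0 < r := Real.sqrt_pos.mpr hqpos
  have hr2 : r * r = ω t ⬝ᵥ M *ᵥ ω t := Real.mul_self_sqrt hqpos.le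
  have hs : HasDerivAt (fun s => Real.sqrt (ω s ⬝ᵥ M *ᵥ ω s)) (1 / (2 * r) * q') t :=
    (Real.hasDerivAt_sqrt hqpos.ne').comp t hq
  refine ⟨(1 / κ) * (1 / (2 * r) * q'), hs.const_mul (1 / κ), ?_⟩
  -- the LMI bound
  have hLMI2 : ω t ⬝ᵥ (Aᵀ * M) *ᵥ ω t + ω t ⬝ᵥ (M * A) *ᵥ ω t
      + ω t ⬝ᵥ (Eᵀ * W * E) *ᵥ ω t + lam * (ω t ⬝ᵥ M *ᵥ ω t) ≤ 0 := by
    have h0 := hLMI.dotProduct_mulVec_nonneg (ω t)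
    simp only [neg_mulVec, dotProduct_neg, add_mulVec, dotProduct_add,
      smul_mulVec, dotProduct_smul, smul_eq_mul, star_trivial] at h0
    linarith
  have hAterm : ω t ⬝ᵥ (Aᵀ * M) *ᵥ ω t = ω t ⬝ᵥ M *ᵥ (A *ᵥ ω t) := by
    rw [← mulVec_mulVec, dotProduct_mulVec, vecMul_transpose]
    exact dot_symm' M hsym (ω t) (A *ᵥ ω t)
  have hMA : ω t ⬝ᵥ (M * A) *ᵥ ω t = ω t ⬝ᵥ M *ᵥ (A *ᵥ ω t) := by
    rw [← mulVec_mulVec]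
  have hEterm : 0 ≤ ω t ⬝ᵥ (Eᵀ * W * E) *ᵥ ω t := by
    have : ω t ⬝ᵥ (Eᵀ * W * E) *ᵥ ω t = (E *ᵥ ω t) ⬝ᵥ W *ᵥ (E *ᵥ ω t) := by
      rw [← mulVec_mulVec, ← mulVec_mulVec, dotProduct_mulVec, vecMul_transpose]
    rw [this]
    refine Finset.sum_nonneg fun i _ => mul_nonneg (hE i) ?_
    simp only [mulVec, dotProduct]
    exact Finset.sum_nonneg fun j _ => mul_nonneg (hWpos i j) (hE j)
  have hAbound : 2 * (ω t ⬝ᵥ M *ᵥ (A *ᵥ ω t)) ≤ -lam * (ω t ⬝ᵥ M *ᵥ ω t) := by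
    rw [hAterm, hMA] at hLMI2
    linarith
  -- Cauchy–Schwarz bounds
  have hc1 := cs' M hpsd hsym (ω t) v₁
  have hc2 := cs' M hpsd hsym (ω t) v₂
  have hc3 := cs' M hpsd hsym (ω t) c
  set a₁ := Real.sqrt (v₁ ⬝ᵥ M *ᵥ v₁)
  set a₂ := Real.sqrt (v₂ ⬝ᵥ M *ᵥ v₂)
  set a₃ := Real.sqrt (c ⬝ᵥ M *ᵥ c)
  have hq'eq : q' = 2 * (ω t ⬝ᵥ M *ᵥ (A *ᵥ ω t)) + 2 * (ω t ⬝ᵥ M *ᵥ v₁)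
      + 2 * (ω t ⬝ᵥ M *ᵥ v₂) + 2 * (ω t ⬝ᵥ M *ᵥ c) := by
    have hux : u ⬝ᵥ M *ᵥ ω t = ω t ⬝ᵥ M *ᵥ u := dot_symm' M hsym (ω t) u
    rw [hq'def, hux, hu]
    simp only [mulVec_add, dotProduct_add]
    ring
  have hq'le : q' ≤ -lam * (r * r) + 2 * r * (a₁ + a₂ + a₃) := by
    rw [hq'eq, hr2]
    nlinarith [hc1, hc2, hc3, hAbound]
  have hstep : 1 / (2 * r) * q' ≤ -(lam / 2) * r + (a₁ + a₂ + a₃) := by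
    rw [div_mul_eq_mul_div, one_mul, div_le_iff₀ (by positivity)]
    nlinarith [hq'le]
  have hκ' : 0 ≤ 1 / κ := by positivity
  calc (1 / κ) * (1 / (2 * r) * q') ≤ (1 / κ) * (-(lam / 2) * r + (a₁ + a₂ + a₃)) :=
        mul_le_mul_of_nonneg_left hstep hκ'
    _ = -(lam / 2) * ((1 / κ) * r) + (1 / κ) * (a₁ + a₂ + a₃) := by ring
end

section
/- Let M be a symmetric positive definite N×N real matrix, m > 0, λ > 0, κ > 0, and let M̄ = diag(M, m) and Λ̄ = diag(λI_N, 0) be (N+1)×(N+1) block matrices. Let A be an N×N real matrix and Ā = diag(A, 0). Let Ē be a b×(N+1) real matrix and W a symmetric b×b real matrix with nonnegative entries, such that ĀᵀM̄ + M̄Ā + ĒᵀWĒ + Λ̄M̄ ⪯ 0. Let ω : ℝ → ℝ^N have derivative A ω(t) + v₁ + v₂ + c at time t for some v₁, v₂, c ∈ ℝ^N, set ω̄(t) = (ω(t), 1) ∈ ℝ^{N+1}, and suppose Ē ω̄(t) ≥ 0 entrywise. Then (i) V(ω̄(t)) := (1/κ)√(ω̄(t)ᵀM̄ω̄(t)) ≥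 (1/κ)√m, and (ii) t ↦ V(ω̄(t)) has a derivative D at t satisfying D ≤ −(λ/2) V(ω̄(t)) + (λ/(2κ))√m + (1/κ)(√(v₁ᵀMv₁) + √(v₂ᵀMv₂) + √(cᵀMc)). (Per-mode differential inequality for the simulation function in a mode whose cell boundaries do not all cross the origin, as in the proof of Theorem 1.) -/
open Matrix

/-- `aug v = (v, 1)`: the vector obtained by appending the entry `1` to `v`. -/
def aug {N : ℕ} (v : Fin N → ℝ) : Fin N ⊕ Unit → ℝ := Sum.elim v fun _ => 1

lemma psd_quad_nonneg {n : Type*} [Fintype n] {M : Matrix n n ℝ} (hM : M.PosSemidef)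
    (x : n → ℝ) : 0 ≤ x ⬝ᵥ M *ᵥ x := by
  simpa using hM.dotProduct_mulVec_nonneg x

lemma psd_cs {n : Type*} [Fintype n] [DecidableEq n] {M : Matrix n n ℝ} (hM : M.PosSemidef)
    (x y : n → ℝ) :
    x ⬝ᵥ M *ᵥ y ≤ Real.sqrt (x ⬝ᵥ M *ᵥ x) * Real.sqrt (y ⬝ᵥ M *ᵥ y) := by
  obtain ⟨B, rfl⟩ : ∃ B : Matrix n n ℝ, M = Bᴴ * B := by
    open scoped MatrixOrder in
    obtain ⟨X, hX, -, h⟩ := CFC.exists_sqrt_of_isSelfAdjoint_of_quasispectrumRestricts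
      hM.isHermitian (QuasispectrumRestricts.nnreal_of_nonneg hM.nonneg)
    exact ⟨X, by rw [← h]; nth_rewrite 1 [← hX.star_eq]; rfl⟩
  have key : ∀ u v : n → ℝ, u ⬝ᵥ (Bᴴ * B) *ᵥ v = (B *ᵥ u) ⬝ᵥ (B *ᵥ v) := by
    intro u v
    rw [← Matrix.mulVec_mulVec, Matrix.dotProduct_mulVec]
    simp [Matrix.conjTranspose_eq_transpose_of_trivial, Matrix.vecMul_transpose]
  rw [key, key, key]
  have := Real.sum_mul_le_sqrt_mul_sqrt Finset.univ (B *ᵥ x) (B *ᵥ y)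
  simpa [dotProduct, pow_two] using this

lemma aug_quad {N : ℕ} (P : Matrix (Fin N) (Fin N) ℝ) (S : Matrix Unit Unit ℝ)
    (x y : Fin N → ℝ) :
    aug x ⬝ᵥ (Matrix.fromBlocks P 0 0 S) *ᵥ aug y = x ⬝ᵥ P *ᵥ y + S () () := by
  simp [aug, Matrix.fromBlocks_mulVec, sumElim_dotProduct_sumElim,
    Matrix.mulVec, dotProduct]

/-- Per-mode differential inequality for the simulation function in a mode whose cell
boundaries do not all cross the origin. With `M̄ = diag(M, m)`, `Ā = diag(A, 0)`,
`Λ̄ = diag(λ Iₙ, 0)`, the LMI `Āᵀ M̄ + M̄ Ā + Ēᵀ W Ē + Λ̄ M̄ ⪯ 0`, the augmented state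
`ω̄(t) = (ω(t), 1)` in the cell `Ē ω̄(t) ≥ 0`, and `ω̇ = A ω + v₁ + v₂ + c`:
(i) `V(ω̄(t)) ≥ (1/κ)√m`, and (ii) `V(ω̄(·))` has a derivative `D` at `t` with
`D ≤ -(λ/2) V(ω̄(t)) + (λ/(2κ))√m + (1/κ)(√(v₁ᵀMv₁) + √(v₂ᵀMv₂) + √(cᵀMc))`. -/
theorem stmt_8 {N b : ℕ} (M : Matrix (Fin N) (Fin N) ℝ) (hM : M.PosDef)
    (m lam κ : ℝ) (hm : 0 < m) (hlam : 0 < lam) (hκ : 0 < κ)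
    (A : Matrix (Fin N) (Fin N) ℝ)
    (Ebar : Matrix (Fin b) (Fin N ⊕ Unit) ℝ)
    (W : Matrix (Fin b) (Fin b) ℝ) (hW : W.IsSymm) (hWpos : ∀ i j, 0 ≤ W i j)
    (hLMI : (-((Matrix.fromBlocks A 0 0 0)ᵀ * Matrix.fromBlocks M 0 0 (Matrix.of fun _ _ => m)
        + Matrix.fromBlocks M 0 0 (Matrix.of fun _ _ => m) * Matrix.fromBlocks A 0 0 0
        + Ebarᵀ * W * Ebar
        + Matrix.fromBlocks (lam • (1 : Matrix (Fin N) (Fin N) ℝ)) 0 0 0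
            * Matrix.fromBlocks M 0 0 (Matrix.of fun _ _ => m))).PosSemidef)
    (ω : ℝ → Fin N → ℝ) (v₁ v₂ c : Fin N → ℝ) (t : ℝ)
    (hω : HasDerivAt ω (A *ᵥ ω t + v₁ + v₂ + c) t)
    (hE : ∀ i, 0 ≤ (Ebar *ᵥ aug (ω t)) i) :
    (1 / κ) * Real.sqrt m ≤
      (1 / κ) * Real.sqrt (aug (ω t) ⬝ᵥ
        Matrix.fromBlocks M 0 0 (Matrix.of fun _ _ => m) *ᵥ aug (ω t)) ∧
    ∃ D : ℝ,
      HasDerivAt (fun s => (1 / κ) * Real.sqrt (aug (ω s) ⬝ᵥ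
          Matrix.fromBlocks M 0 0 (Matrix.of fun _ _ => m) *ᵥ aug (ω s))) D t ∧
      D ≤ -(lam / 2) * ((1 / κ) * Real.sqrt (aug (ω t) ⬝ᵥ
            Matrix.fromBlocks M 0 0 (Matrix.of fun _ _ => m) *ᵥ aug (ω t)))
        + (lam / (2 * κ)) * Real.sqrt m
        + (1 / κ) * (Real.sqrt (v₁ ⬝ᵥ M *ᵥ v₁) + Real.sqrt (v₂ ⬝ᵥ M *ᵥ v₂)
          + Real.sqrt (c ⬝ᵥ M *ᵥ c)) := by
  have hMpsd := hM.posSemidef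
  have hMsymm : Mᵀ = M := by
    rw [← Matrix.conjTranspose_eq_transpose_of_trivial]; exact hM.1
  have symmbil : ∀ x y : Fin N → ℝ, x ⬝ᵥ M *ᵥ y = y ⬝ᵥ M *ᵥ x := by
    intro x y
    rw [Matrix.dotProduct_mulVec x M y]
    conv_lhs => rw [← hMsymm]
    rw [Matrix.vecMul_transpose, dotProduct_comm]
  -- abbreviations
  set d : Fin N → ℝ := A *ᵥ ω t + v₁ + v₂ + c with hd_def
  -- the augmented quadratic form
  have eV : ∀ x : Fin N → ℝ,
      aug x ⬝ᵥ Matrix.fromBlocks M 0 0 (Matrix.of fun _ _ => m) *ᵥ aug x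
        = x ⬝ᵥ M *ᵥ x + m := by
    intro x
    rw [aug_quad]
    rfl
  -- nonnegativity of the quadratic form
  have hq0 : 0 ≤ ω t ⬝ᵥ M *ᵥ ω t := psd_quad_nonneg hMpsd (ω t)
  have hQpos : 0 < ω t ⬝ᵥ M *ᵥ ω t + m := by linarith
  have hsm_le : Real.sqrt m ≤ Real.sqrt (ω t ⬝ᵥ M *ᵥ ω t + m) :=
    Real.sqrt_le_sqrt (by linarith)
  have hsmpos : 0 < Real.sqrt m := Real.sqrt_pos.mpr hm
  have hsQpos : 0 < Real.sqrt (ω t ⬝ᵥ M *ᵥ ω t + m) := lt_of_lt_of_le hsmpos hsm_le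
  constructor
  · rw [eV]
    exact mul_le_mul_of_nonneg_left hsm_le (by positivity)
  -- derivative of the quadratic form
  have hcomp : ∀ i, HasDerivAt (fun s => ω s i) (d i) t := fun i =>
    hasDerivAt_pi.mp hω i
  have hq : HasDerivAt (fun s => ω s ⬝ᵥ M *ᵥ ω s) (2 * (ω t ⬝ᵥ M *ᵥ d)) t := by
    have h1 : HasDerivAt (fun s => ∑ i, ∑ j, ω s i * (M i j * ω s j))
        (∑ i, ∑ j, (d i * (M i j * ω t j) + ω t i * (M i j * d j))) t := by
      apply HasDerivAt.fun_sum
      intro i _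
      apply HasDerivAt.fun_sum
      intro j _
      exact (hcomp i).mul ((hcomp j).const_mul (M i j))
    have e1 : (fun s => ω s ⬝ᵥ M *ᵥ ω s) = fun s => ∑ i, ∑ j, ω s i * (M i j * ω s j) := by
      funext s
      simp [dotProduct, Matrix.mulVec, Finset.mul_sum]
    have e2 : (∑ i, ∑ j, (d i * (M i j * ω t j) + ω t i * (M i j * d j)))
        = 2 * (ω t ⬝ᵥ M *ᵥ d) := by
      have e3 : (∑ i, ∑ j, (d i * (M i j * ω t j) + ω t i * (M i j * d j)))
          = d ⬝ᵥ M *ᵥ ω t + ω t ⬝ᵥ M *ᵥ d := by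
        simp [dotProduct, Matrix.mulVec, Finset.mul_sum, Finset.sum_add_distrib]
      rw [e3, symmbil d (ω t)]
      ring
    rw [e1, ← e2]
    exact h1
  -- the LMI consequence
  have hkey : ω t ⬝ᵥ M *ᵥ (A *ᵥ ω t) ≤ -(lam / 2) * (ω t ⬝ᵥ M *ᵥ ω t) := by
    have h0 := hLMI.dotProduct_mulVec_nonneg (aug (ω t))
    simp only [Matrix.neg_mulVec, dotProduct_neg, star_trivial,
      Matrix.add_mulVec, dotProduct_add, Left.nonneg_neg_iff] at h0
    -- compute each of the four pieces
    have eq1 : aug (ω t) ⬝ᵥ ((Matrix.fromBlocks A 0 0 0)ᵀ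
          * Matrix.fromBlocks M 0 0 (Matrix.of fun _ _ => m)) *ᵥ aug (ω t)
        = ω t ⬝ᵥ M *ᵥ (A *ᵥ ω t) := by
      have hprod : (Matrix.fromBlocks A 0 0 0)ᵀ
            * Matrix.fromBlocks M 0 0 (Matrix.of fun _ _ => m)
          = Matrix.fromBlocks (Aᵀ * M) 0 0 (0 : Matrix Unit Unit ℝ) := by
        simp [Matrix.fromBlocks_transpose, Matrix.fromBlocks_multiply]
      rw [hprod, aug_quad]
      have : ω t ⬝ᵥ (Aᵀ * M) *ᵥ ω t = (A *ᵥ ω t) ⬝ᵥ M *ᵥ ω t := by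
        rw [← Matrix.mulVec_mulVec, Matrix.dotProduct_mulVec (ω t) Aᵀ,
          Matrix.vecMul_transpose]
      rw [this, symmbil (A *ᵥ ω t) (ω t)]
      simp
    have eq2 : aug (ω t) ⬝ᵥ (Matrix.fromBlocks M 0 0 (Matrix.of fun _ _ => m)
          * Matrix.fromBlocks A 0 0 0) *ᵥ aug (ω t)
        = ω t ⬝ᵥ M *ᵥ (A *ᵥ ω t) := by
      have hprod : Matrix.fromBlocks M 0 0 (Matrix.of fun _ _ => m)
            * Matrix.fromBlocks A 0 0 0
          = Matrix.fromBlocks (M * A) 0 0 (0 : Matrix Unit Unit ℝ) := by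
        simp [Matrix.fromBlocks_multiply]
      rw [hprod, aug_quad, ← Matrix.mulVec_mulVec]
      simp
    have eq4 : aug (ω t) ⬝ᵥ (Matrix.fromBlocks (lam • (1 : Matrix (Fin N) (Fin N) ℝ)) 0 0 0
          * Matrix.fromBlocks M 0 0 (Matrix.of fun _ _ => m)) *ᵥ aug (ω t)
        = lam * (ω t ⬝ᵥ M *ᵥ ω t) := by
      have hprod : Matrix.fromBlocks (lam • (1 : Matrix (Fin N) (Fin N) ℝ)) 0 0 0
            * Matrix.fromBlocks M 0 0 (Matrix.of fun _ _ => m)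
          = Matrix.fromBlocks (lam • M) 0 0 (0 : Matrix Unit Unit ℝ) := by
        simp [Matrix.fromBlocks_multiply]
      rw [hprod, aug_quad]
      simp [Matrix.smul_mulVec, dotProduct_smul, smul_eq_mul]
    have eq3 : 0 ≤ aug (ω t) ⬝ᵥ (Ebarᵀ * W * Ebar) *ᵥ aug (ω t) := by
      have e : aug (ω t) ⬝ᵥ (Ebarᵀ * W * Ebar) *ᵥ aug (ω t)
          = (Ebar *ᵥ aug (ω t)) ⬝ᵥ W *ᵥ (Ebar *ᵥ aug (ω t)) := by
        rw [← Matrix.mulVec_mulVec, ← Matrix.mulVec_mulVec,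
          Matrix.dotProduct_mulVec (aug (ω t)) Ebarᵀ, Matrix.vecMul_transpose]
      rw [e]
      generalize hgen : Ebar *ᵥ aug (ω t) = e2 at hE ⊢
      simp only [dotProduct, Matrix.mulVec]
      exact Finset.sum_nonneg fun i _ => mul_nonneg (hE i)
        (Finset.sum_nonneg fun j _ => mul_nonneg (hWpos i j) (hE j))
    rw [eq1, eq2, eq4] at h0
    linarith
  -- Cauchy-Schwarz bounds
  have hsq_le : Real.sqrt (ω t ⬝ᵥ M *ᵥ ω t) ≤ Real.sqrt (ω t ⬝ᵥ M *ᵥ ω t + m) :=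
    Real.sqrt_le_sqrt (by linarith)
  have hcs : ∀ v : Fin N → ℝ, ω t ⬝ᵥ M *ᵥ v
      ≤ Real.sqrt (ω t ⬝ᵥ M *ᵥ ω t + m) * Real.sqrt (v ⬝ᵥ M *ᵥ v) := fun v =>
    (psd_cs hMpsd (ω t) v).trans
      (mul_le_mul_of_nonneg_right hsq_le (Real.sqrt_nonneg _))
  -- assemble the derivative
  have hQ : HasDerivAt (fun s => ω s ⬝ᵥ M *ᵥ ω s + m) (2 * (ω t ⬝ᵥ M *ᵥ d)) t :=
    hq.add_const m
  have hsqrt := (hQ.sqrt (ne_of_gt hQpos)).const_mul (1 / κ)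
  refine ⟨(1 / κ) * (2 * (ω t ⬝ᵥ M *ᵥ d) / (2 * Real.sqrt (ω t ⬝ᵥ M *ᵥ ω t + m))), ?_, ?_⟩
  · simp only [eV]
    exact hsqrt
  · rw [eV]
    set sQ := Real.sqrt (ω t ⬝ᵥ M *ᵥ ω t + m) with hsQ_def
    set sm := Real.sqrt m with hsm_def
    set S := Real.sqrt (v₁ ⬝ᵥ M *ᵥ v₁) + Real.sqrt (v₂ ⬝ᵥ M *ᵥ v₂)
      + Real.sqrt (c ⬝ᵥ M *ᵥ c) with hS_def
    have hX : ω t ⬝ᵥ M *ᵥ d ≤ -(lam / 2) * (ω t ⬝ᵥ M *ᵥ ω t) + sQ * S := by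
      have expand : ω t ⬝ᵥ M *ᵥ d = ω t ⬝ᵥ M *ᵥ (A *ᵥ ω t) + ω t ⬝ᵥ M *ᵥ v₁
          + ω t ⬝ᵥ M *ᵥ v₂ + ω t ⬝ᵥ M *ᵥ c := by
        rw [hd_def]
        simp [Matrix.mulVec_add, dotProduct_add]
      rw [expand, hS_def]
      have h1 := hcs v₁
      have h2 := hcs v₂
      have h3 := hcs c
      nlinarith [hkey]
    have hsQ2 : sQ ^ 2 = ω t ⬝ᵥ M *ᵥ ω t + m := Real.sq_sqrt hQpos.le
    have hsm2 : sm * sm = m := Real.mul_self_sqrt hm.le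
    have hmsQ : m ≤ sm * sQ := by nlinarith [hsm_le, hsmpos.le]
    have hchain : 2 * (ω t ⬝ᵥ M *ᵥ d) / (2 * sQ)
        ≤ -(lam / 2) * sQ + (lam / 2) * sm + S := by
      rw [div_le_iff₀ (by positivity)]
      nlinarith [hX, hsQpos]
    have hfinal : (1 / κ) * (2 * (ω t ⬝ᵥ M *ᵥ d) / (2 * sQ))
        ≤ (1 / κ) * (-(lam / 2) * sQ + (lam / 2) * sm + S) :=
      mul_le_mul_of_nonneg_left hchain (by positivity)
    have hring : (1 / κ) * (-(lam / 2) * sQ + (lam / 2) * sm + S)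
        = -(lam / 2) * ((1 / κ) * sQ) + (lam / (2 * κ)) * sm + (1 / κ) * S := by
      field_simp
    linarith [hfinal, hring.le]
end

section
/- Under the hypotheses of the per-mode differential inequality—M symmetric positive definite N×N, λ > 0, κ > 0, AᵀM + MA + EᵀWE + λM ⪯ 0 with W symmetric with nonnegative entries, ω : ℝ → ℝ^N having derivative A ω(t) + v₁ + v₂ + c at t, E ω(t) ≥ 0 entrywise, ω(t) ≠ 0—assume in addition that V(ω(t)) > (2/(λκ))(√(v₁ᵀMv₁) + √(v₂ᵀMv₂) + √(cᵀMc)), where V(ω) = (1/κ)√(ωᵀMω). Then the derivative of t ↦ V(ω(t)) at t is strictly negative. (The paper's claim that the simulation function strictly decreases whenever it exceeds the class-K threshold determined by the transformed input, the abstraction state, and the disturbance.) -/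
open Matrix

lemma my_sym {N : ℕ} {M : Matrix (Fin N) (Fin N) ℝ} (hM : M.IsHermitian) (v w : Fin N → ℝ) :
    w ⬝ᵥ M *ᵥ v = v ⬝ᵥ M *ᵥ w := by
  simp only [dotProduct, mulVec, Finset.mul_sum]
  rw [Finset.sum_comm]
  refine Finset.sum_congr rfl fun j _ => Finset.sum_congr rfl fun i _ => ?_
  have := hM.apply i j
  simp only [conjTranspose_apply, star_trivial] at this
  rw [← this]; ring

lemma my_cs {N : ℕ} {M : Matrix (Fin N) (Fin N) ℝ} (hM : M.PosSemidef) (v w : Fin N → ℝ) :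
    v ⬝ᵥ M *ᵥ w ≤ Real.sqrt (v ⬝ᵥ M *ᵥ v) * Real.sqrt (w ⬝ᵥ M *ᵥ w) := by
  set a := w ⬝ᵥ M *ᵥ w with ha
  set c := v ⬝ᵥ M *ᵥ v with hc
  set bb := v ⬝ᵥ M *ᵥ w with hb
  have hsym : w ⬝ᵥ M *ᵥ v = bb := my_sym hM.1 v w
  have key : ∀ x : ℝ, 0 ≤ a * (x * x) + (2 * bb) * x + c := by
    intro x
    have h0 := hM.dotProduct_mulVec_nonneg (v + x • w)
    simp only [star_trivial] at h0
    have expand : (v + x • w) ⬝ᵥ M *ᵥ (v + x • w)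
        = a * (x * x) + (2 * bb) * x + c := by
      simp only [mulVec_add, dotProduct_add, add_dotProduct, mulVec_smul, dotProduct_smul,
        smul_dotProduct, smul_eq_mul, hsym]
      ring
    rw [expand] at h0
    exact h0
  have hd := discrim_le_zero key
  rw [discrim] at hd
  have hv0 : (0:ℝ) ≤ c := by have := hM.dotProduct_mulVec_nonneg v; simpa using this
  have hsq : bb ^ 2 ≤ c * a := by nlinarith
  calc bb ≤ |bb| := le_abs_self _
    _ = Real.sqrt (bb ^ 2) := (Real.sqrt_sq_eq_abs bb).symm
    _ ≤ Real.sqrt (c * a) := Real.sqrt_le_sqrt hsq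
    _ = Real.sqrt c * Real.sqrt a := Real.sqrt_mul hv0 a

lemma my_quad_deriv {N : ℕ} (M : Matrix (Fin N) (Fin N) ℝ) (ω : ℝ → Fin N → ℝ)
    (ωd : Fin N → ℝ) (t : ℝ) (hω : HasDerivAt ω ωd t) :
    HasDerivAt (fun s => ω s ⬝ᵥ M *ᵥ ω s) (ωd ⬝ᵥ M *ᵥ ω t + ω t ⬝ᵥ M *ᵥ ωd) t := by
  have hc : ∀ i, HasDerivAt (fun s => ω s i) (ωd i) t := fun i => hasDerivAt_pi.mp hω i
  have H : HasDerivAt (fun s => ∑ i, ∑ j, ω s i * (M i j * ω s j))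
      (∑ i, ∑ j, (ωd i * (M i j * ω t j) + ω t i * (M i j * ωd j))) t :=
    HasDerivAt.fun_sum fun i _ => HasDerivAt.fun_sum fun j _ =>
      (hc i).mul ((hc j).const_mul (M i j))
  have hfun : (fun s => ω s ⬝ᵥ M *ᵥ ω s) = fun s => ∑ i, ∑ j, ω s i * (M i j * ω s j) := by
    funext s
    simp [dotProduct, mulVec, Finset.mul_sum]
  have hval : ωd ⬝ᵥ M *ᵥ ω t + ω t ⬝ᵥ M *ᵥ ωd
      = ∑ i, ∑ j, (ωd i * (M i j * ω t j) + ω t i * (M i j * ωd j)) := by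
    simp [dotProduct, mulVec, Finset.mul_sum, Finset.sum_add_distrib]
  rw [hfun, hval]
  exact H

/-- Strict decrease of the simulation function above the class-K threshold: under the
per-mode hypotheses (`M` symmetric positive definite, `Aᵀ M + M A + Eᵀ W E + λ M ⪯ 0`,
`ω̇ = A ω + v₁ + v₂ + c`, `E ω(t) ≥ 0`, `ω(t) ≠ 0`), if
`V(ω(t)) > (2/(λκ))(√(v₁ᵀMv₁) + √(v₂ᵀMv₂) + √(cᵀMc))`, then the derivative of
`t ↦ V(ω(t))` at `t` is strictly negative. -/
theorem stmt_11 {N b : ℕ} (M : Matrix (Fin N) (Fin N) ℝ) (hM : M.PosDef)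
    (lam κ : ℝ) (hlam : 0 < lam) (hκ : 0 < κ)
    (A : Matrix (Fin N) (Fin N) ℝ) (E : Matrix (Fin b) (Fin N) ℝ)
    (W : Matrix (Fin b) (Fin b) ℝ) (hW : W.IsSymm) (hWpos : ∀ i j, 0 ≤ W i j)
    (hLMI : (-(Aᵀ * M + M * A + Eᵀ * W * E + lam • M)).PosSemidef)
    (ω : ℝ → Fin N → ℝ) (v₁ v₂ c : Fin N → ℝ) (t : ℝ)
    (hω : HasDerivAt ω (A *ᵥ ω t + v₁ + v₂ + c) t)
    (hE : ∀ i, 0 ≤ (E *ᵥ ω t) i) (hne : ω t ≠ 0)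
    (hV : (2 / (lam * κ)) * (Real.sqrt (v₁ ⬝ᵥ M *ᵥ v₁) + Real.sqrt (v₂ ⬝ᵥ M *ᵥ v₂)
        + Real.sqrt (c ⬝ᵥ M *ᵥ c))
      < (1 / κ) * Real.sqrt (ω t ⬝ᵥ M *ᵥ ω t)) :
    ∃ D : ℝ, HasDerivAt (fun s => (1 / κ) * Real.sqrt (ω s ⬝ᵥ M *ᵥ ω s)) D t ∧ D < 0 := by
  set x := ω t with hx
  set ωd := A *ᵥ x + v₁ + v₂ + c with hωd
  set q := x ⬝ᵥ M *ᵥ x with hqdef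
  have hMps := hM.posSemidef
  have hqpos : 0 < q := by have := hM.dotProduct_mulVec_pos hne; simpa using this
  have hrpos : 0 < Real.sqrt q := Real.sqrt_pos.mpr hqpos
  set r := Real.sqrt q with hr
  have hrq : r * r = q := Real.mul_self_sqrt hqpos.le
  set d := ωd ⬝ᵥ M *ᵥ x + x ⬝ᵥ M *ᵥ ωd with hd
  have hq : HasDerivAt (fun s => ω s ⬝ᵥ M *ᵥ ω s) d t := my_quad_deriv M ω ωd t hω
  have hsqrt : HasDerivAt (fun s => Real.sqrt (ω s ⬝ᵥ M *ᵥ ω s)) (d / (2 * r)) t :=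
    hq.sqrt hqpos.ne'
  refine ⟨(1 / κ) * (d / (2 * r)), hsqrt.const_mul (1 / κ), ?_⟩
  -- bound d
  set S := Real.sqrt (v₁ ⬝ᵥ M *ᵥ v₁) + Real.sqrt (v₂ ⬝ᵥ M *ᵥ v₂) + Real.sqrt (c ⬝ᵥ M *ᵥ c)
    with hS
  have hSnn : 0 ≤ S := by positivity
  have h2S : 2 * S < lam * r := by
    have hlk : 0 < lam * κ := mul_pos hlam hκ
    rw [div_mul_eq_mul_div, div_lt_iff₀ hlk] at hV
    calc 2 * S < 1 / κ * r * (lam * κ) := hV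
      _ = lam * r := by field_simp
  -- LMI consequence
  have hL : x ⬝ᵥ (Aᵀ * M) *ᵥ x + x ⬝ᵥ (M * A) *ᵥ x + x ⬝ᵥ (Eᵀ * W * E) *ᵥ x
      + lam * q ≤ 0 := by
    have h0 := hLMI.dotProduct_mulVec_nonneg x
    simp only [star_trivial, neg_mulVec, dotProduct_neg, add_mulVec, dotProduct_add,
      smul_mulVec, dotProduct_smul, smul_eq_mul, ← hqdef] at h0
    linarith
  have hWnn : 0 ≤ x ⬝ᵥ (Eᵀ * W * E) *ᵥ x := by
    have heq : x ⬝ᵥ (Eᵀ * W * E) *ᵥ x = (E *ᵥ x) ⬝ᵥ W *ᵥ (E *ᵥ x) := by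
      rw [← mulVec_mulVec, ← mulVec_mulVec, dotProduct_mulVec x Eᵀ, vecMul_transpose]
    rw [heq]
    simp only [dotProduct, mulVec]
    refine Finset.sum_nonneg fun i _ => mul_nonneg ?_ ?_
    · simpa [mulVec, dotProduct] using hE i
    · refine Finset.sum_nonneg fun j _ => mul_nonneg (hWpos i j) ?_
      simpa [mulVec, dotProduct] using hE j
  have hquad : (A *ᵥ x) ⬝ᵥ M *ᵥ x + x ⬝ᵥ M *ᵥ (A *ᵥ x) + lam * q ≤ 0 := by
    have h1 : x ⬝ᵥ (Aᵀ * M) *ᵥ x = (A *ᵥ x) ⬝ᵥ M *ᵥ x := by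
      rw [← mulVec_mulVec, dotProduct_mulVec x Aᵀ, vecMul_transpose]
    have h2 : x ⬝ᵥ (M * A) *ᵥ x = x ⬝ᵥ M *ᵥ (A *ᵥ x) := by
      rw [← mulVec_mulVec]
    rw [← h1, ← h2]
    linarith
  have hcross : ∀ v : Fin N → ℝ, v ⬝ᵥ M *ᵥ x ≤ Real.sqrt (v ⬝ᵥ M *ᵥ v) * r :=
    fun v => my_cs hMps v x
  have hdle : d ≤ -(lam * q) + 2 * (S * r) := by
    have e1 : d = ((A *ᵥ x) ⬝ᵥ M *ᵥ x + x ⬝ᵥ M *ᵥ (A *ᵥ x))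
        + (v₁ ⬝ᵥ M *ᵥ x + v₂ ⬝ᵥ M *ᵥ x + c ⬝ᵥ M *ᵥ x)
        + (x ⬝ᵥ M *ᵥ v₁ + x ⬝ᵥ M *ᵥ v₂ + x ⬝ᵥ M *ᵥ c) := by
      rw [hd, hωd]
      simp only [add_dotProduct, mulVec_add, dotProduct_add]
      ring
    have e2 : ∀ v : Fin N → ℝ, x ⬝ᵥ M *ᵥ v = v ⬝ᵥ M *ᵥ x := fun v => my_sym hM.1 v x
    rw [e1, e2 v₁, e2 v₂, e2 c]
    have := hcross v₁
    have := hcross v₂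
    have := hcross c
    rw [hS]
    nlinarith [hquad]
  have hdneg : d < 0 := by nlinarith
  have : d / (2 * r) < 0 := div_neg_of_neg_of_pos hdneg (by linarith)
  have hκ' : 0 < 1 / κ := by positivity
  exact mul_neg_of_pos_of_neg hκ' this
end

section
/- (Forward invariance of the robust approximate simulation relation.) Under the hypotheses of the single-mode Theorem 1 with cell boundaries through the origin—matrices A, B, C, F, G, H, L, P, Q, R, K with H = C P, P F = A P + B Q; M symmetric positive definite N×N (N = n+m) with M − C′ᵀC′ ⪰ 0 (C′ = [C 0]) and A′ᵀM + MA′ + EᵀWE + λM ⪯ 0 (A′ = diag(A+BK, F+GL), λ > 0, W symmetric with nonnegative entries); trajectories x₁, x₂ satisfying for all t ≥ 0 the concrete dynamics with the interface u₁(t) = R ū₂(t) + (Q + R L) x₂(t) + K(x₁(t) − P x₂(t)), the transformed abstraction dynamics, with joint state ω(t) = (x₁(t) − P x₂(t), x₂(t)) remaining in the cell E ω(t) ≥ 0, and with √(v₁(t)ᵀMv₁(t)) ≤ β₁, √(v₂(t)ᵀMv₂(t)) ≤ β₂, √(c′(t)ᵀMc′(t)) ≤ β₃ for v₁(t) = ((BR−PG)L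 x₂(t), 0), v₂(t) = ((BR−PG)ū₂(t), G ū₂(t)), c′(t) = (c(t), 0)—the sublevel set of the simulation function of level b := (2/(λκ))(β₁ + β₂ + β₃) is forward invariant: if V(ω(0)) ≤ b then V(ω(t)) ≤ b for all t ≥ 0, where V(ω) = (1/κ)√(ωᵀMω), κ > 0. -/
open Matrix




private lemma symm_dot_swap {ι : Type*} [Fintype ι] {S : Matrix ι ι ℝ} (hS : Sᵀ = S)
    (x y : ι → ℝ) : x ⬝ᵥ S *ᵥ y = y ⬝ᵥ S *ᵥ x := by
  rw [Matrix.dotProduct_mulVec]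
  conv_lhs => rw [← hS]
  rw [Matrix.vecMul_transpose, dotProduct_comm]

private lemma psd_cauchy_schwarz {ι : Type*} [Fintype ι] {S : Matrix ι ι ℝ}
    (hS : S.PosSemidef) (x y : ι → ℝ) :
    x ⬝ᵥ S *ᵥ y ≤ Real.sqrt (x ⬝ᵥ S *ᵥ x) * Real.sqrt (y ⬝ᵥ S *ᵥ y) := by
  have hSt : Sᵀ = S := by simpa using hS.1.eq
  have hc : (0:ℝ) ≤ x ⬝ᵥ S *ᵥ x := by simpa using hS.dotProduct_mulVec_nonneg x
  have ha : (0:ℝ) ≤ y ⬝ᵥ S *ᵥ y := by simpa using hS.dotProduct_mulVec_nonneg y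
  set a := y ⬝ᵥ S *ᵥ y
  set c := x ⬝ᵥ S *ᵥ x
  set b2 := x ⬝ᵥ S *ᵥ y with hb2
  have key : ∀ r : ℝ, 0 ≤ a * (r * r) + (2 * b2) * r + c := by
    intro r
    have h0 : (0:ℝ) ≤ (x + r • y) ⬝ᵥ S *ᵥ (x + r • y) := by simpa using hS.dotProduct_mulVec_nonneg (x + r • y)
    have hyx : y ⬝ᵥ S *ᵥ x = b2 := symm_dot_swap hSt y x
    calc (0:ℝ) ≤ (x + r • y) ⬝ᵥ S *ᵥ (x + r • y) := h0
      _ = a * (r * r) + (2 * b2) * r + c := by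
          simp only [Matrix.mulVec_add, Matrix.mulVec_smul, add_dotProduct,
            dotProduct_add, smul_dotProduct, dotProduct_smul,
            smul_eq_mul, hyx]
          ring
  have hd := discrim_le_zero key
  have hb2sq : b2 ^ 2 ≤ c * a := by
    rw [discrim] at hd; nlinarith
  calc b2 ≤ |b2| := le_abs_self _
    _ = Real.sqrt (b2 ^ 2) := (Real.sqrt_sq_eq_abs b2).symm
    _ ≤ Real.sqrt (c * a) := Real.sqrt_le_sqrt hb2sq
    _ = Real.sqrt c * Real.sqrt a := Real.sqrt_mul hc a

private lemma hasDerivAt_quadForm {ι : Type*} [Fintype ι] (S : Matrix ι ι ℝ)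
    {w : ℝ → ι → ℝ} {w' : ι → ℝ} {t : ℝ} (hw : HasDerivAt w w' t) :
    HasDerivAt (fun s => w s ⬝ᵥ S *ᵥ w s)
      (w' ⬝ᵥ S *ᵥ w t + w t ⬝ᵥ S *ᵥ w') t := by
  have h1 : ∀ i, HasDerivAt (fun s => w s i) (w' i) t := hasDerivAt_pi.mp hw
  have h2 : HasDerivAt (fun s => ∑ i, w s i * ∑ j, S i j * w s j)
      (∑ i, (w' i * ∑ j, S i j * w t j + w t i * ∑ j, S i j * w' j)) t := by
    refine HasDerivAt.fun_sum fun i _ => ?_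
    exact (h1 i).mul (HasDerivAt.fun_sum fun j _ => (h1 j).const_mul (S i j))
  convert h2 using 2
  simp only [dotProduct, Matrix.mulVec]
  exact Finset.sum_add_distrib.symm

private lemma elim_add {α β' : Type*} (f g : α → ℝ) (h i : β' → ℝ) :
    Sum.elim f h + Sum.elim g i = Sum.elim (f + g) (h + i) := by
  funext x; cases x <;> simp



set_option maxHeartbeats 1000000 in
/-- Forward invariance of the robust approximate simulation relation: under the
hypotheses of the single-mode Theorem 1 with cell boundaries through the origin, the
sublevel set of the simulation function `V(ω) = (1/κ)√(ωᵀMω)` of level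
`b = (2/(λκ))(β₁ + β₂ + β₃)` is forward invariant: if `V(ω(0)) ≤ b` then
`V(ω(t)) ≤ b` for all `t ≥ 0`, where `ω(t) = (x₁(t) - P x₂(t), x₂(t))`. -/
theorem stmt_15 {n m p q k b : ℕ}
    (A : Matrix (Fin n) (Fin n) ℝ) (B : Matrix (Fin n) (Fin p) ℝ)
    (C : Matrix (Fin k) (Fin n) ℝ)
    (F : Matrix (Fin m) (Fin m) ℝ) (G : Matrix (Fin m) (Fin q) ℝ)
    (H : Matrix (Fin k) (Fin m) ℝ) (L : Matrix (Fin q) (Fin m) ℝ)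
    (P : Matrix (Fin n) (Fin m) ℝ) (Q : Matrix (Fin p) (Fin m) ℝ)
    (R : Matrix (Fin p) (Fin q) ℝ) (K : Matrix (Fin p) (Fin n) ℝ)
    (hH : H = C * P) (hPF : P * F = A * P + B * Q)
    (M : Matrix (Fin n ⊕ Fin m) (Fin n ⊕ Fin m) ℝ) (hM : M.PosDef)
    (lam κ : ℝ) (hlam : 0 < lam) (hκ : 0 < κ)
    (E : Matrix (Fin b) (Fin n ⊕ Fin m) ℝ) (W : Matrix (Fin b) (Fin b) ℝ)
    (hW : W.IsSymm) (hWpos : ∀ i j, 0 ≤ W i j)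
    (hCLMI : (M - (Matrix.fromCols C 0)ᵀ * Matrix.fromCols C 0).PosSemidef)
    (hLMI : (-((Matrix.fromBlocks (A + B * K) 0 0 (F + G * L))ᵀ * M
        + M * Matrix.fromBlocks (A + B * K) 0 0 (F + G * L)
        + Eᵀ * W * E + lam • M)).PosSemidef)
    (x₁ : ℝ → Fin n → ℝ) (x₂ : ℝ → Fin m → ℝ)
    (u₁ : ℝ → Fin p → ℝ) (ubar₂ : ℝ → Fin q → ℝ) (c : ℝ → Fin n → ℝ)
    (β₁ β₂ β₃ : ℝ)
    (hx₁ : ∀ t ≥ (0 : ℝ), HasDerivAt x₁ (A *ᵥ x₁ t + B *ᵥ u₁ t + c t) t)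
    (hu₁ : ∀ t ≥ (0 : ℝ),
      u₁ t = R *ᵥ ubar₂ t + (Q + R * L) *ᵥ x₂ t + K *ᵥ (x₁ t - P *ᵥ x₂ t))
    (hx₂ : ∀ t ≥ (0 : ℝ), HasDerivAt x₂ ((F + G * L) *ᵥ x₂ t + G *ᵥ ubar₂ t) t)
    (hcell : ∀ t ≥ (0 : ℝ), ∀ i, 0 ≤ (E *ᵥ Sum.elim (x₁ t - P *ᵥ x₂ t) (x₂ t)) i)
    (hβ₁ : ∀ t ≥ (0 : ℝ),
      Real.sqrt (Sum.elim ((B * R - P * G) *ᵥ (L *ᵥ x₂ t)) 0 ⬝ᵥ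
        M *ᵥ Sum.elim ((B * R - P * G) *ᵥ (L *ᵥ x₂ t)) 0) ≤ β₁)
    (hβ₂ : ∀ t ≥ (0 : ℝ),
      Real.sqrt (Sum.elim ((B * R - P * G) *ᵥ ubar₂ t) (G *ᵥ ubar₂ t) ⬝ᵥ
        M *ᵥ Sum.elim ((B * R - P * G) *ᵥ ubar₂ t) (G *ᵥ ubar₂ t)) ≤ β₂)
    (hβ₃ : ∀ t ≥ (0 : ℝ),
      Real.sqrt (Sum.elim (c t) 0 ⬝ᵥ M *ᵥ Sum.elim (c t) 0) ≤ β₃)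
    (hV0 : (1 / κ) * Real.sqrt (Sum.elim (x₁ 0 - P *ᵥ x₂ 0) (x₂ 0) ⬝ᵥ
        M *ᵥ Sum.elim (x₁ 0 - P *ᵥ x₂ 0) (x₂ 0)) ≤
      (2 / (lam * κ)) * (β₁ + β₂ + β₃)) :
    ∀ t ≥ (0 : ℝ),
      (1 / κ) * Real.sqrt (Sum.elim (x₁ t - P *ᵥ x₂ t) (x₂ t) ⬝ᵥ
          M *ᵥ Sum.elim (x₁ t - P *ᵥ x₂ t) (x₂ t)) ≤
        (2 / (lam * κ)) * (β₁ + β₂ + β₃) := by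
  intro t ht
  have hMpsd : M.PosSemidef := hM.posSemidef
  have hMsym : Mᵀ = M := by simpa using hM.1.eq
  set A' := Matrix.fromBlocks (A + B * K) 0 0 (F + G * L) with hA'
  set w : ℝ → (Fin n ⊕ Fin m) → ℝ := fun s => Sum.elim (x₁ s - P *ᵥ x₂ s) (x₂ s) with hwdef
  set v₁ : ℝ → (Fin n ⊕ Fin m) → ℝ :=
    fun s => Sum.elim ((B * R - P * G) *ᵥ (L *ᵥ x₂ s)) 0 with hv₁
  set v₂ : ℝ → (Fin n ⊕ Fin m) → ℝ :=
    fun s => Sum.elim ((B * R - P * G) *ᵥ ubar₂ s) (G *ᵥ ubar₂ s) with hv₂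
  set cv : ℝ → (Fin n ⊕ Fin m) → ℝ := fun s => Sum.elim (c s) 0 with hcv
  set f : ℝ → ℝ := fun s => w s ⬝ᵥ M *ᵥ w s with hfdef
  set β := β₁ + β₂ + β₃ with hβ
  set r := 2 * β / lam with hr
  have hfnn : ∀ s, 0 ≤ f s := fun s => by simpa using hMpsd.dotProduct_mulVec_nonneg (w s)
  have hfeq : ∀ s, f s = Sum.elim (x₁ s - P *ᵥ x₂ s) (x₂ s) ⬝ᵥ
      M *ᵥ Sum.elim (x₁ s - P *ᵥ x₂ s) (x₂ s) := fun s => rfl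
  have hβ₁0 : 0 ≤ β₁ := le_trans (Real.sqrt_nonneg _) (hβ₁ 0 le_rfl)
  have hβ₂0 : 0 ≤ β₂ := le_trans (Real.sqrt_nonneg _) (hβ₂ 0 le_rfl)
  have hβ₃0 : 0 ≤ β₃ := le_trans (Real.sqrt_nonneg _) (hβ₃ 0 le_rfl)
  have hβ0 : 0 ≤ β := by rw [hβ]; linarith
  have hr0 : 0 ≤ r := by rw [hr]; positivity
  have hlamr : lam * r = 2 * β := by rw [hr]; field_simp
  set dvec : ℝ → (Fin n ⊕ Fin m) → ℝ :=
    fun s => A' *ᵥ w s + v₁ s + v₂ s + cv s with hdvec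
  -- derivative of w
  have hw : ∀ s ≥ (0:ℝ), HasDerivAt w (dvec s) s := by
    intro s hs
    have h1 := hasDerivAt_pi.mp (hx₁ s hs)
    have h2 := hasDerivAt_pi.mp (hx₂ s hs)
    set e₁ : Fin n → ℝ := A *ᵥ x₁ s + B *ᵥ u₁ s + c s with he₁
    set e₂ : Fin m → ℝ := (F + G * L) *ᵥ x₂ s + G *ᵥ ubar₂ s with he₂
    have hwraw : HasDerivAt w (Sum.elim (e₁ - P *ᵥ e₂) e₂) s := by
      rw [hasDerivAt_pi]
      rintro (i | i)
      · have hP : HasDerivAt (fun s' => (P *ᵥ x₂ s') i) ((P *ᵥ e₂) i) s := by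
          simp only [Matrix.mulVec, dotProduct]
          exact HasDerivAt.fun_sum fun j _ => (h2 j).const_mul (P i j)
        have := (h1 i).sub hP
        simp only [hwdef, Sum.elim_inl, Pi.sub_apply]
        exact this
      · simp only [hwdef, Sum.elim_inr]
        exact h2 i
    have halg : dvec s = Sum.elim (e₁ - P *ᵥ e₂) e₂ := by
      have hinl : e₁ - P *ᵥ e₂ =
          (A + B * K) *ᵥ (x₁ s - P *ᵥ x₂ s) + ((B * R - P * G) *ᵥ (L *ᵥ x₂ s)
            + ((B * R - P * G) *ᵥ ubar₂ s + c s)) := by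
        rw [he₁, he₂, hu₁ s hs]
        simp only [Matrix.mulVec_add, Matrix.mulVec_sub, Matrix.add_mulVec,
          Matrix.sub_mulVec, Matrix.mulVec_mulVec, Matrix.add_mul, Matrix.sub_mul,
          Matrix.mul_add, Matrix.mul_sub, Matrix.mul_assoc, hPF]
        abel
      have hinr : e₂ = (F + G * L) *ᵥ x₂ s + (0 : Fin m → ℝ)
          + (G *ᵥ ubar₂ s + (0 : Fin m → ℝ)) := by
        rw [he₂]; abel
      rw [hdvec]
      show A' *ᵥ w s + v₁ s + v₂ s + cv s = _
      rw [hwdef, hv₁, hv₂, hcv]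
      show A' *ᵥ Sum.elim (x₁ s - P *ᵥ x₂ s) (x₂ s)
          + Sum.elim ((B * R - P * G) *ᵥ (L *ᵥ x₂ s)) 0
          + Sum.elim ((B * R - P * G) *ᵥ ubar₂ s) (G *ᵥ ubar₂ s)
          + Sum.elim (c s) 0 = _
      rw [hA', Matrix.fromBlocks_mulVec]
      simp only [Sum.elim_comp_inl, Sum.elim_comp_inr, Matrix.zero_mulVec,
        add_zero, zero_add]
      rw [elim_add, elim_add, elim_add]
      refine congrArg₂ Sum.elim ?_ ?_
      · rw [hinl]; abel
      · rw [hinr]; abel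
    rw [halg]
    exact hwraw
  -- derivative of f
  set f' : ℝ → ℝ := fun s => 2 * (w s ⬝ᵥ M *ᵥ dvec s) with hf'def
  have hf' : ∀ s ≥ (0:ℝ), HasDerivAt f (f' s) s := by
    intro s hs
    have hq := hasDerivAt_quadForm M (hw s hs)
    have heq : dvec s ⬝ᵥ M *ᵥ w s + w s ⬝ᵥ M *ᵥ dvec s = f' s := by
      rw [hf'def]
      show _ = 2 * (w s ⬝ᵥ M *ᵥ dvec s)
      rw [symm_dot_swap hMsym (dvec s) (w s)]; ring
    rw [heq] at hq
    exact hq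
  -- key differential inequality
  have hkey : ∀ s ≥ (0:ℝ), f' s ≤ -lam * f s + 2 * β * Real.sqrt (f s) := by
    intro s hs
    have hexp : w s ⬝ᵥ M *ᵥ dvec s
        = w s ⬝ᵥ M *ᵥ (A' *ᵥ w s) + w s ⬝ᵥ M *ᵥ v₁ s + w s ⬝ᵥ M *ᵥ v₂ s
          + w s ⬝ᵥ M *ᵥ cv s := by
      rw [hdvec]
      show w s ⬝ᵥ M *ᵥ (A' *ᵥ w s + v₁ s + v₂ s + cv s) = _
      simp only [Matrix.mulVec_add, dotProduct_add]
    -- LMI bound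
    have hlmi := hLMI.dotProduct_mulVec_nonneg (w s)
    simp only [star_trivial, Matrix.neg_mulVec, dotProduct_neg, Matrix.add_mulVec,
      dotProduct_add, Matrix.smul_mulVec, dotProduct_smul,
      smul_eq_mul, neg_nonneg] at hlmi
    have ht1 : w s ⬝ᵥ (A'ᵀ * M) *ᵥ w s = w s ⬝ᵥ M *ᵥ (A' *ᵥ w s) := by
      rw [← Matrix.mulVec_mulVec, Matrix.dotProduct_mulVec, Matrix.vecMul_transpose]
      exact symm_dot_swap hMsym (A' *ᵥ w s) (w s)
    have ht2 : w s ⬝ᵥ (M * A') *ᵥ w s = w s ⬝ᵥ M *ᵥ (A' *ᵥ w s) := by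
      rw [← Matrix.mulVec_mulVec]
    have ht3 : 0 ≤ w s ⬝ᵥ (Eᵀ * W * E) *ᵥ w s := by
      rw [Matrix.mul_assoc, ← Matrix.mulVec_mulVec, Matrix.dotProduct_mulVec,
        Matrix.vecMul_transpose, ← Matrix.mulVec_mulVec]
      have hcell' := hcell s hs
      rw [hwdef]
      show (0:ℝ) ≤ (E *ᵥ Sum.elim (x₁ s - P *ᵥ x₂ s) (x₂ s)) ⬝ᵥ
        (W *ᵥ (E *ᵥ Sum.elim (x₁ s - P *ᵥ x₂ s) (x₂ s)))
      simp only [dotProduct, Matrix.mulVec]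
      refine Finset.sum_nonneg fun i _ => mul_nonneg (hcell' i) ?_
      exact Finset.sum_nonneg fun j _ => mul_nonneg (hWpos i j) (hcell' j)
    have hquad : 2 * (w s ⬝ᵥ M *ᵥ (A' *ᵥ w s)) ≤ -lam * f s := by
      have : w s ⬝ᵥ (A'ᵀ * M) *ᵥ w s + w s ⬝ᵥ (M * A') *ᵥ w s
          + w s ⬝ᵥ (Eᵀ * W * E) *ᵥ w s + lam * (w s ⬝ᵥ M *ᵥ w s) ≤ 0 := hlmi
      rw [ht1, ht2] at this
      have hfs : w s ⬝ᵥ M *ᵥ w s = f s := rfl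
      rw [hfs] at this
      linarith
    have hb1 : w s ⬝ᵥ M *ᵥ v₁ s ≤ Real.sqrt (f s) * β₁ := by
      refine le_trans (psd_cauchy_schwarz hMpsd (w s) (v₁ s)) ?_
      exact mul_le_mul_of_nonneg_left (hβ₁ s hs) (Real.sqrt_nonneg _)
    have hb2 : w s ⬝ᵥ M *ᵥ v₂ s ≤ Real.sqrt (f s) * β₂ := by
      refine le_trans (psd_cauchy_schwarz hMpsd (w s) (v₂ s)) ?_
      exact mul_le_mul_of_nonneg_left (hβ₂ s hs) (Real.sqrt_nonneg _)
    have hb3 : w s ⬝ᵥ M *ᵥ cv s ≤ Real.sqrt (f s) * β₃ := by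
      refine le_trans (psd_cauchy_schwarz hMpsd (w s) (cv s)) ?_
      exact mul_le_mul_of_nonneg_left (hβ₃ s hs) (Real.sqrt_nonneg _)
    have : f' s = 2 * (w s ⬝ᵥ M *ᵥ dvec s) := rfl
    rw [this, hexp, hβ]
    nlinarith [Real.sqrt_nonneg (f s)]
  -- initial condition
  have h2r : 2 / (lam * κ) * β = (1 / κ) * r := by
    rw [hr]; field_simp
  have hf0 : Real.sqrt (f 0) ≤ r := by
    have hV0' : (1 / κ) * Real.sqrt (f 0) ≤ (1 / κ) * r := by
      rw [← h2r, hfeq 0]; exact hV0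
    exact (mul_le_mul_iff_right₀ (by positivity)).mp hV0'
  have hf0sq : f 0 ≤ r ^ 2 := by
    nlinarith [Real.sq_sqrt (hfnn 0), Real.sqrt_nonneg (f 0)]
  clear_value A' w v₁ v₂ cv f β r dvec f'
  clear hfdef hwdef hv₁ hv₂ hcv hdvec hf'def hβ hr hA'
  -- Gronwall / fencing argument
  have hmain : f t ≤ r ^ 2 := by
    refine le_of_forall_pos_le_add fun ε' hε' => ?_
    have h1T : (0:ℝ) < 1 + t := by linarith
    set ε := ε' / (1 + t) with hε
    have hε0 : 0 < ε := by positivity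
    have hfence : ∀ ⦃x⦄, x ∈ Set.Icc (0:ℝ) t → f x ≤ r ^ 2 + ε * (1 + x) := by
      refine image_le_of_deriv_right_lt_deriv_boundary' (f' := f') (B' := fun _ => ε)
        (fun x hx => ((hf' x hx.1).continuousAt).continuousWithinAt)
        (fun x hx => (hf' x hx.1).hasDerivWithinAt)
        (by norm_num; linarith)
        (by fun_prop)
        (fun x _ => by
          have h : HasDerivAt (fun s => r ^ 2 + ε * (1 + s)) ε x := by
            have h := ((hasDerivAt_id x).const_add (1:ℝ)).const_mul ε
            simpa using h.const_add (r ^ 2)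
          exact h.hasDerivWithinAt)
        (fun x hx hfx => by
          have hk := hkey x hx.1
          have hrfx : r ^ 2 < f x := by nlinarith [hx.1]
          have hs0nn := Real.sqrt_nonneg (f x)
          have hs0 : Real.sqrt (f x) ^ 2 = f x := Real.sq_sqrt (hfnn x)
          have hrs : r < Real.sqrt (f x) := by nlinarith
          have hs0pos : 0 < Real.sqrt (f x) := lt_of_le_of_lt hr0 hrs
          have hkey2 : lam * r * Real.sqrt (f x) = 2 * β * Real.sqrt (f x) := by
            rw [hlamr]
          have : -lam * f x + 2 * β * Real.sqrt (f x) < ε := by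
            nlinarith [mul_pos (mul_pos hlam hs0pos) (sub_pos.mpr hrs)]
          linarith)
    have hfin := hfence (Set.right_mem_Icc.mpr ht)
    have hεt : ε * (1 + t) = ε' := by rw [hε]; field_simp
    linarith
  -- conclusion
  have hsq : Real.sqrt (f t) ≤ r := by
    calc Real.sqrt (f t) ≤ Real.sqrt (r ^ 2) := Real.sqrt_le_sqrt hmain
      _ = r := Real.sqrt_sq hr0
  rw [← hfeq t, h2r]
  exact mul_le_mul_of_nonneg_left hsq (by positivity)
end
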